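/- For σ,σ' ∈ ℝ, the operator S_{σ'−σ} = exp(iħ(σ'−σ) ∂_x ∂_p) intertwines the σ-star product with the σ'-star product on polynomial (or formal power series) functions in (x,p): S_{σ'−σ}(f ⋆_σ g) = (S_{σ'−σ} f) ⋆_{σ'} (S_{σ'−σ} g), where f ⋆_σ g = Σ_{n,m≥0} (−1)^m (iħ)^{n+m} (σ^n (1−σ)^m / (n! m!)) (∂_x^n ∂_p^m f)(∂_x^m ∂_p^n g). -/

import Mathlib

open scoped Nat

/-- Iterated partial derivative `∂_x^n ∂_p^m` on polynomials in the two variables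
`x` (index `0`) and `p` (index `1`). -/
noncomputable def dxdp (n m : ℕ) (f : MvPolynomial (Fin 2) ℂ) : MvPolynomial (Fin 2) ℂ :=
  (fun h => MvPolynomial.pderiv (0 : Fin 2) h)^[n]
    ((fun h => MvPolynomial.pderiv (1 : Fin 2) h)^[m] f)

/-- The `σ`-star product on polynomials:
`f ⋆_σ g = Σ_{n,m} (−1)^m (iħ)^{n+m} σ^n (1−σ)^m /(n!m!) (∂_x^n ∂_p^m f)(∂_x^m ∂_p^n g)`
(a finite sum on polynomials, expressed as a `finsum`). -/
noncomputable def polyStar (hbar σ : ℝ) (f g : MvPolynomial (Fin 2) ℂ) :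
    MvPolynomial (Fin 2) ℂ :=
  ∑ᶠ nm : ℕ × ℕ,
    ((-1 : ℂ) ^ nm.2 * (Complex.I * (hbar : ℂ)) ^ (nm.1 + nm.2) * (σ : ℂ) ^ nm.1 *
        ((1 : ℂ) - (σ : ℂ)) ^ nm.2 / ((nm.1)! * (nm.2)!)) •
      (dxdp nm.1 nm.2 f * dxdp nm.2 nm.1 g)

/-- The intertwining operator `S_c = exp(iħ c ∂_x∂_p)` on polynomials. -/
noncomputable def Sop (hbar c : ℝ) (f : MvPolynomial (Fin 2) ℂ) : MvPolynomial (Fin 2) ℂ :=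
  ∑ᶠ k : ℕ, ((Complex.I * (hbar : ℂ) * (c : ℂ)) ^ k / (k)!) • dxdp k k f

namespace StarAux

open MvPolynomial Finset

abbrev P2 := MvPolynomial (Fin 2) ℂ

noncomputable def Dv (i : Fin 2) : P2 → P2 := fun h => MvPolynomial.pderiv i h

lemma dxdp_def (n m : ℕ) (f : P2) : dxdp n m f = (Dv 0)^[n] ((Dv 1)^[m] f) := rfl

lemma Dv_add (i : Fin 2) (f g : P2) : Dv i (f + g) = Dv i f + Dv i g := map_add _ _ _
lemma Dv_smul (i : Fin 2) (a : ℂ) (f : P2) : Dv i (a • f) = a • Dv i f :=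
  Derivation.map_smul _ _ _
lemma Dv_zero (i : Fin 2) : Dv i (0 : P2) = 0 := map_zero _

lemma iterDv_add (i : Fin 2) (k : ℕ) (f g : P2) :
    (Dv i)^[k] (f + g) = (Dv i)^[k] f + (Dv i)^[k] g := by
  induction k generalizing f g with
  | zero => rfl
  | succ k ih => simp [Function.iterate_succ_apply, Dv_add, ih]

lemma iterDv_smul (i : Fin 2) (k : ℕ) (a : ℂ) (f : P2) :
    (Dv i)^[k] (a • f) = a • (Dv i)^[k] f := by
  induction k generalizing f with
  | zero => rfl
  | succ k ih => simp [Function.iterate_succ_apply, Dv_smul, ih]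

lemma iterDv_zero (i : Fin 2) (k : ℕ) : (Dv i)^[k] (0 : P2) = 0 := by
  induction k with
  | zero => rfl
  | succ k ih => simp [Function.iterate_succ_apply, Dv_zero, ih]

lemma dxdp_add (n m : ℕ) (f g : P2) : dxdp n m (f + g) = dxdp n m f + dxdp n m g := by
  simp [dxdp_def, iterDv_add]

lemma dxdp_smul (n m : ℕ) (a : ℂ) (f : P2) : dxdp n m (a • f) = a • dxdp n m f := by
  simp [dxdp_def, iterDv_smul]

lemma dxdp_zero (n m : ℕ) : dxdp n m (0 : P2) = 0 := by
  simp [dxdp_def, iterDv_zero]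

lemma dxdp_sum {α : Type*} (n m : ℕ) (s : Finset α) (F : α → P2) :
    dxdp n m (∑ a ∈ s, F a) = ∑ a ∈ s, dxdp n m (F a) := by
  induction s using Finset.cons_induction with
  | empty => simp [dxdp_zero]
  | cons a s ha ih => simp [Finset.sum_cons, dxdp_add, ih]

lemma Dv_comm (i j : Fin 2) (f : P2) : Dv i (Dv j f) = Dv j (Dv i f) := by
  rcases eq_or_ne i j with rfl | hij
  · rfl
  · induction f using MvPolynomial.induction_on' with
    | monomial s a =>
      simp only [Dv, pderiv_monomial]
      rw [Finsupp.tsub_apply, Finsupp.tsub_apply,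
        Finsupp.single_eq_of_ne' (Ne.symm hij), Finsupp.single_eq_of_ne' hij]
      simp only [Nat.sub_zero]
      have h2 : (s - Finsupp.single j 1) - Finsupp.single i 1
          = (s - Finsupp.single i 1) - Finsupp.single j 1 := by
        ext x
        simp only [Finsupp.tsub_apply, Finsupp.single_apply]
        omega
      rw [h2, mul_right_comm]
    | add p q hp hq => simp [Dv_add, hp, hq]




open MvPolynomial Finset

lemma Dv_iter_comm (i j : Fin 2) (k : ℕ) (f : P2) :
    Dv i ((Dv j)^[k] f) = (Dv j)^[k] (Dv i f) := by
  induction k generalizing f with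
  | zero => rfl
  | succ k ih => rw [Function.iterate_succ_apply, Function.iterate_succ_apply, ih, Dv_comm]

lemma dxdp_succ_left (n m : ℕ) (f : P2) : dxdp (n + 1) m f = dxdp n m (Dv 0 f) := by
  rw [dxdp_def, dxdp_def, Function.iterate_succ_apply, Dv_iter_comm]

lemma dxdp_succ_right (n m : ℕ) (f : P2) : dxdp n (m + 1) f = dxdp n m (Dv 1 f) := by
  rw [dxdp_def, dxdp_def, Function.iterate_succ_apply]

lemma Dv0_dxdp (n m : ℕ) (f : P2) : Dv 0 (dxdp n m f) = dxdp (n + 1) m f := by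
  rw [dxdp_def, dxdp_def, ← Function.iterate_succ_apply' (Dv 0)]

lemma Dv1_dxdp (n m : ℕ) (f : P2) : Dv 1 (dxdp n m f) = dxdp n (m + 1) f := by
  rw [dxdp_def, dxdp_def, Dv_iter_comm, ← Function.iterate_succ_apply' (Dv 1)]

lemma Dv_X_self (i : Fin 2) (f : P2) :
    Dv i (MvPolynomial.X i * f) = f + MvPolynomial.X i * Dv i f := by
  show MvPolynomial.pderiv i (MvPolynomial.X i * f) = _
  rw [pderiv_mul, pderiv_X_self, one_mul]
  rfl

lemma Dv_X_ne {i j : Fin 2} (h : j ≠ i) (f : P2) :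
    Dv i (MvPolynomial.X j * f) = MvPolynomial.X j * Dv i f := by
  show MvPolynomial.pderiv i (MvPolynomial.X j * f) = _
  rw [pderiv_mul, pderiv_X_of_ne h, zero_mul, zero_add]
  rfl

lemma iterDv_nsmul (i : Fin 2) (k n : ℕ) (f : P2) :
    (Dv i)^[k] (n • f) = n • (Dv i)^[k] f := by
  rw [← Nat.cast_smul_eq_nsmul ℂ, ← Nat.cast_smul_eq_nsmul ℂ, iterDv_smul]

lemma nsmul_iter_pred (i : Fin 2) (n : ℕ) (f : P2) :
    n • (Dv i)^[n - 1] (Dv i f) = n • (Dv i)^[n] f := by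
  cases n with
  | zero => rw [zero_smul, zero_smul]
  | succ n => rw [Nat.add_sub_cancel, ← Function.iterate_succ_apply]

lemma iterDv_X_self (i : Fin 2) (n : ℕ) (f : P2) :
    (Dv i)^[n] (MvPolynomial.X i * f)
      = MvPolynomial.X i * (Dv i)^[n] f + n • (Dv i)^[n - 1] f := by
  induction n generalizing f with
  | zero => simp
  | succ n ih =>
    rw [Function.iterate_succ_apply, Dv_X_self, iterDv_add, ih, Nat.add_sub_cancel,
      nsmul_iter_pred, ← Function.iterate_succ_apply, succ_nsmul]
    abel

lemma iterDv_X_ne {i j : Fin 2} (h : j ≠ i) (n : ℕ) (f : P2) :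
    (Dv i)^[n] (MvPolynomial.X j * f) = MvPolynomial.X j * (Dv i)^[n] f := by
  induction n generalizing f with
  | zero => rfl
  | succ n ih => rw [Function.iterate_succ_apply, Dv_X_ne h, ih, ← Function.iterate_succ_apply]

lemma dxdp_X0_mul (n m : ℕ) (f : P2) :
    dxdp n m (MvPolynomial.X 0 * f)
      = MvPolynomial.X 0 * dxdp n m f + n • dxdp (n - 1) m f := by
  rw [dxdp_def, iterDv_X_ne (show (0 : Fin 2) ≠ 1 by decide), iterDv_X_self]
  rfl

lemma dxdp_X1_mul (n m : ℕ) (f : P2) :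
    dxdp n m (MvPolynomial.X 1 * f)
      = MvPolynomial.X 1 * dxdp n m f + m • dxdp n (m - 1) f := by
  rw [dxdp_def, iterDv_X_self, iterDv_add, iterDv_X_ne (show (1 : Fin 2) ≠ 0 by decide),
    iterDv_nsmul]
  rfl




open MvPolynomial Finset

lemma iterDv_monomial (i : Fin 2) (k : ℕ) (s : Fin 2 →₀ ℕ) (a : ℂ) :
    (Dv i)^[k] (monomial s a)
      = monomial (s - Finsupp.single i k) (a * ∏ j ∈ range k, ((s i - j : ℕ) : ℂ)) := by
  induction k with
  | zero => simp
  | succ k ih =>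
    rw [Function.iterate_succ_apply', ih]
    show MvPolynomial.pderiv i _ = _
    rw [pderiv_monomial]
    have h1 : (s - Finsupp.single i k) i = s i - k := by
      rw [Finsupp.tsub_apply, Finsupp.single_eq_same]
    have h2 : s - Finsupp.single i k - Finsupp.single i 1 = s - Finsupp.single i (k + 1) := by
      ext x
      simp only [Finsupp.tsub_apply, Finsupp.single_apply]
      split <;> omega
    rw [h1, h2, Finset.prod_range_succ, mul_assoc]

lemma iterDv_monomial_eq_zero (i : Fin 2) {k : ℕ} {s : Fin 2 →₀ ℕ} (a : ℂ) (h : s i < k) :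
    (Dv i)^[k] (monomial s a) = 0 := by
  rw [iterDv_monomial]
  have : ((s i - (s i) : ℕ) : ℂ) = 0 := by simp
  rw [Finset.prod_eq_zero (Finset.mem_range.mpr h) this, mul_zero, monomial_zero]

lemma sum_fin2 (s : Fin 2 →₀ ℕ) : (s.sum fun _ e => e) = s 0 + s 1 := by
  rw [Finsupp.sum_fintype _ _ (fun _ => rfl), Fin.sum_univ_two]

lemma dxdp_monomial_eq_zero {n m : ℕ} {s : Fin 2 →₀ ℕ} (a : ℂ)
    (h : s 0 + s 1 < n + m) : dxdp n m (monomial s a) = 0 := by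
  rcases lt_or_ge (s 1) m with hm | hm
  · rw [dxdp_def, iterDv_monomial_eq_zero 1 a hm, iterDv_zero]
  · have hn : s 0 < n := by omega
    rw [dxdp_def, iterDv_monomial]
    refine iterDv_monomial_eq_zero 0 _ ?_
    rw [Finsupp.tsub_apply, Finsupp.single_eq_of_ne (by decide), Nat.sub_zero]
    exact hn

lemma dxdp_eq_zero_of_lt {n m : ℕ} {f : P2} (h : f.totalDegree < n + m) :
    dxdp n m f = 0 := by
  conv_lhs => rw [f.as_sum]
  rw [dxdp_sum]
  refine Finset.sum_eq_zero fun d hd => dxdp_monomial_eq_zero _ ?_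
  have := MvPolynomial.le_totalDegree hd
  rw [sum_fin2] at this
  omega

lemma totalDegree_Dv_le (i : Fin 2) (f : P2) : (Dv i f).totalDegree ≤ f.totalDegree := by
  conv_lhs => rw [f.as_sum]
  show (MvPolynomial.pderiv i _).totalDegree ≤ _
  rw [map_sum]
  refine totalDegree_finsetSum_le fun d hd => ?_
  rw [pderiv_monomial]
  refine (totalDegree_monomial_le _ _).trans ?_
  have h1 := MvPolynomial.le_totalDegree hd
  rw [sum_fin2] at h1
  have h2 : ((d - Finsupp.single i 1).sum fun _ e => e) ≤ f.totalDegree := by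
    rw [sum_fin2]
    have e0 := Finsupp.tsub_apply d (Finsupp.single i 1) 0
    have e1 := Finsupp.tsub_apply d (Finsupp.single i 1) 1
    omega
  exact h2




open MvPolynomial Finset

noncomputable def Bop (u v : ℂ) (f g : P2) : P2 :=
  ∑ᶠ nm : ℕ × ℕ,
    ((u ^ nm.1 * v ^ nm.2) / ((nm.1)! * (nm.2)!)) • (dxdp nm.1 nm.2 f * dxdp nm.2 nm.1 g)

noncomputable def Sgen (t : ℂ) (f : P2) : P2 :=
  ∑ᶠ k : ℕ, (t ^ k / (k)!) • dxdp k k f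

lemma Bop_eq_sum (u v : ℂ) (f g : P2) (N M : ℕ)
    (hN : f.totalDegree < N) (hM : f.totalDegree < M) :
    Bop u v f g = ∑ n ∈ range N, ∑ m ∈ range M,
      ((u ^ n * v ^ m) / ((n)! * (m)!)) • (dxdp n m f * dxdp m n g) := by
  rw [Bop, ← Finset.sum_product']
  apply finsum_eq_sum_of_support_subset
  intro nm hnm
  simp only [Function.mem_support] at hnm
  simp only [Finset.coe_product, Set.mem_prod, Finset.mem_coe, Finset.mem_range]
  by_contra hc
  push_neg at hc
  apply hnm
  have hlt : f.totalDegree < nm.1 + nm.2 := by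
    rcases Nat.lt_or_ge nm.1 N with h | h
    · have := hc h
      omega
    · omega
  rw [dxdp_eq_zero_of_lt hlt, zero_mul, smul_zero]

lemma Sgen_eq_sum (t : ℂ) (f : P2) (N : ℕ) (hN : f.totalDegree < N) :
    Sgen t f = ∑ k ∈ range N, (t ^ k / (k)!) • dxdp k k f := by
  rw [Sgen]
  apply finsum_eq_sum_of_support_subset
  intro k hk
  simp only [Function.mem_support] at hk
  simp only [Finset.mem_coe, Finset.mem_range]
  by_contra hc
  apply hk
  have : dxdp k k f = 0 := by
    apply dxdp_eq_zero_of_lt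
    omega
  rw [this, smul_zero]

lemma Bop_comm (u v : ℂ) (f g : P2) : Bop u v f g = Bop v u g f := by
  rw [Bop, Bop, ← finsum_comp_equiv (Equiv.prodComm ℕ ℕ)]
  apply finsum_congr
  intro nm
  simp only [Equiv.prodComm_apply, Prod.fst_swap, Prod.snd_swap]
  rw [mul_comm (dxdp nm.2 nm.1 f)]
  congr 1
  ring

lemma Bop_add_left (u v : ℂ) (f₁ f₂ g : P2) :
    Bop u v (f₁ + f₂) g = Bop u v f₁ g + Bop u v f₂ g := by
  set N := max f₁.totalDegree f₂.totalDegree + 1 with hNdef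
  have h1 : f₁.totalDegree < N := by omega
  have h2 : f₂.totalDegree < N := by omega
  have h12 : (f₁ + f₂).totalDegree < N := by
    have := totalDegree_add f₁ f₂
    omega
  rw [Bop_eq_sum u v _ g N N h12 h12, Bop_eq_sum u v f₁ g N N h1 h1,
    Bop_eq_sum u v f₂ g N N h2 h2, ← Finset.sum_add_distrib]
  refine Finset.sum_congr rfl fun n _ => ?_
  rw [← Finset.sum_add_distrib]
  refine Finset.sum_congr rfl fun m _ => ?_
  rw [dxdp_add, add_mul, smul_add]

lemma Bop_smul_left (u v : ℂ) (a : ℂ) (f g : P2) :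
    Bop u v (a • f) g = a • Bop u v f g := by
  set N := f.totalDegree + 1 with hNdef
  have h1 : f.totalDegree < N := by omega
  have h2 : (a • f).totalDegree < N := by
    have := totalDegree_smul_le a f
    omega
  rw [Bop_eq_sum u v _ g N N h2 h2, Bop_eq_sum u v f g N N h1 h1, Finset.smul_sum]
  refine Finset.sum_congr rfl fun n _ => ?_
  rw [Finset.smul_sum]
  refine Finset.sum_congr rfl fun m _ => ?_
  rw [dxdp_smul, smul_mul_assoc, smul_comm]

lemma Bop_zero_left (u v : ℂ) (g : P2) : Bop u v 0 g = 0 := by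
  rw [Bop]
  apply finsum_eq_zero_of_forall_eq_zero
  intro nm
  rw [dxdp_zero, zero_mul, smul_zero]

lemma Bop_add_right (u v : ℂ) (f g₁ g₂ : P2) :
    Bop u v f (g₁ + g₂) = Bop u v f g₁ + Bop u v f g₂ := by
  rw [Bop_comm, Bop_add_left, Bop_comm v u, Bop_comm v u]

lemma Bop_smul_right (u v : ℂ) (a : ℂ) (f g : P2) :
    Bop u v f (a • g) = a • Bop u v f g := by
  rw [Bop_comm, Bop_smul_left, Bop_comm v u]

lemma Bop_zero_right (u v : ℂ) (f : P2) : Bop u v f 0 = 0 := by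
  rw [Bop_comm, Bop_zero_left]

lemma Bop_one_left (u v : ℂ) (g : P2) : Bop u v 1 g = g := by
  rw [Bop_eq_sum u v 1 g 1 1 (by rw [totalDegree_one]; omega)
    (by rw [totalDegree_one]; omega)]
  simp [dxdp_def]

lemma Sgen_add (t : ℂ) (f₁ f₂ : P2) : Sgen t (f₁ + f₂) = Sgen t f₁ + Sgen t f₂ := by
  set N := max f₁.totalDegree f₂.totalDegree + 1 with hNdef
  have h1 : f₁.totalDegree < N := by omega
  have h2 : f₂.totalDegree < N := by omega
  have h12 : (f₁ + f₂).totalDegree < N := by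
    have := totalDegree_add f₁ f₂
    omega
  rw [Sgen_eq_sum t _ N h12, Sgen_eq_sum t f₁ N h1, Sgen_eq_sum t f₂ N h2,
    ← Finset.sum_add_distrib]
  refine Finset.sum_congr rfl fun k _ => ?_
  rw [dxdp_add, smul_add]

lemma Sgen_smul (t : ℂ) (a : ℂ) (f : P2) : Sgen t (a • f) = a • Sgen t f := by
  set N := f.totalDegree + 1 with hNdef
  have h1 : f.totalDegree < N := by omega
  have h2 : (a • f).totalDegree < N := by
    have := totalDegree_smul_le a f
    omega
  rw [Sgen_eq_sum t _ N h2, Sgen_eq_sum t f N h1, Finset.smul_sum]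
  refine Finset.sum_congr rfl fun k _ => ?_
  rw [dxdp_smul, smul_comm]

lemma Sgen_zero (t : ℂ) : Sgen t (0 : P2) = 0 := by
  rw [Sgen]
  apply finsum_eq_zero_of_forall_eq_zero
  intro k
  rw [dxdp_zero, smul_zero]

lemma Sgen_one (t : ℂ) : Sgen t (1 : P2) = 1 := by
  rw [Sgen_eq_sum t 1 1 (by rw [totalDegree_one]; omega)]
  simp [dxdp_def]

lemma Sgen_C (t : ℂ) (a : ℂ) : Sgen t (MvPolynomial.C a) = MvPolynomial.C a := by
  have : (MvPolynomial.C a : P2) = a • 1 := by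
    rw [smul_eq_C_mul, mul_one]
  rw [this, Sgen_smul, Sgen_one]




open MvPolynomial Finset

lemma fact_ne (k : ℕ) : ((k)! : ℂ) ≠ 0 := Nat.cast_ne_zero.mpr (Nat.factorial_ne_zero k)

lemma Dv_mul (i : Fin 2) (f g : P2) : Dv i (f * g) = Dv i f * g + f * Dv i g :=
  MvPolynomial.pderiv_mul

lemma Dv_sum {α : Type*} (i : Fin 2) (s : Finset α) (F : α → P2) :
    Dv i (∑ a ∈ s, F a) = ∑ a ∈ s, Dv i (F a) :=
  map_sum (MvPolynomial.pderiv i) _ _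

lemma Sgen_Dv0 (t : ℂ) (f : P2) : Sgen t (Dv 0 f) = Dv 0 (Sgen t f) := by
  set N := f.totalDegree + 1 with hN
  have hf : f.totalDegree < N := by omega
  have hD : (Dv 0 f).totalDegree < N := lt_of_le_of_lt (totalDegree_Dv_le 0 f) hf
  rw [Sgen_eq_sum t (Dv 0 f) N hD, Sgen_eq_sum t f N hf]
  rw [show Dv 0 (∑ k ∈ range N, (t ^ k / (k)!) • dxdp k k f)
      = ∑ k ∈ range N, Dv 0 ((t ^ k / (k)!) • dxdp k k f) from
    map_sum (MvPolynomial.pderiv (0 : Fin 2)) _ _]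
  refine Finset.sum_congr rfl fun k _ => ?_
  rw [Dv_smul, Dv0_dxdp, dxdp_succ_left]

lemma Sgen_Dv1 (t : ℂ) (f : P2) : Sgen t (Dv 1 f) = Dv 1 (Sgen t f) := by
  set N := f.totalDegree + 1 with hN
  have hf : f.totalDegree < N := by omega
  have hD : (Dv 1 f).totalDegree < N := lt_of_le_of_lt (totalDegree_Dv_le 1 f) hf
  rw [Sgen_eq_sum t (Dv 1 f) N hD, Sgen_eq_sum t f N hf]
  rw [show Dv 1 (∑ k ∈ range N, (t ^ k / (k)!) • dxdp k k f)
      = ∑ k ∈ range N, Dv 1 ((t ^ k / (k)!) • dxdp k k f) from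
    map_sum (MvPolynomial.pderiv (1 : Fin 2)) _ _]
  refine Finset.sum_congr rfl fun k _ => ?_
  rw [Dv_smul, Dv1_dxdp, dxdp_succ_right]

lemma Bop_Dv0 (u v : ℂ) (f g : P2) :
    Dv 0 (Bop u v f g) = Bop u v (Dv 0 f) g + Bop u v f (Dv 0 g) := by
  set N := f.totalDegree + 1 with hN
  have hf : f.totalDegree < N := by omega
  have hD : (Dv 0 f).totalDegree < N := lt_of_le_of_lt (totalDegree_Dv_le 0 f) hf
  rw [Bop_eq_sum u v f g N N hf hf, Bop_eq_sum u v (Dv 0 f) g N N hD hD,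
    Bop_eq_sum u v f (Dv 0 g) N N hf hf]
  simp only [Dv_sum]
  rw [← Finset.sum_add_distrib]
  refine Finset.sum_congr rfl fun n _ => ?_
  rw [← Finset.sum_add_distrib]
  refine Finset.sum_congr rfl fun m _ => ?_
  rw [Dv_smul, Dv_mul, Dv0_dxdp, Dv0_dxdp, dxdp_succ_left, dxdp_succ_left, smul_add]

lemma Bop_Dv1 (u v : ℂ) (f g : P2) :
    Dv 1 (Bop u v f g) = Bop u v (Dv 1 f) g + Bop u v f (Dv 1 g) := by
  set N := f.totalDegree + 1 with hN
  have hf : f.totalDegree < N := by omega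
  have hD : (Dv 1 f).totalDegree < N := lt_of_le_of_lt (totalDegree_Dv_le 1 f) hf
  rw [Bop_eq_sum u v f g N N hf hf, Bop_eq_sum u v (Dv 1 f) g N N hD hD,
    Bop_eq_sum u v f (Dv 1 g) N N hf hf]
  simp only [Dv_sum]
  rw [← Finset.sum_add_distrib]
  refine Finset.sum_congr rfl fun n _ => ?_
  rw [← Finset.sum_add_distrib]
  refine Finset.sum_congr rfl fun m _ => ?_
  rw [Dv_smul, Dv_mul, Dv1_dxdp, Dv1_dxdp, dxdp_succ_right, dxdp_succ_right, smul_add]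

lemma Sgen_X0 (t : ℂ) (f : P2) :
    Sgen t (MvPolynomial.X 0 * f) = MvPolynomial.X 0 * Sgen t f + t • Sgen t (Dv 1 f) := by
  set N := f.totalDegree + 1 with hN
  have hf : f.totalDegree < N + 1 := by omega
  have hXf : (MvPolynomial.X 0 * f).totalDegree < N + 1 :=
    lt_of_le_of_lt (totalDegree_mul _ _) (by rw [totalDegree_X]; omega)
  have hDf : (Dv 1 f).totalDegree < N := lt_of_le_of_lt (totalDegree_Dv_le 1 f) (by omega)
  rw [Sgen_eq_sum t _ (N + 1) hXf, Sgen_eq_sum t f (N + 1) hf, Sgen_eq_sum t (Dv 1 f) N hDf]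
  have hsplit : ∀ k, (t ^ k / (k)!) • dxdp k k (MvPolynomial.X 0 * f)
      = MvPolynomial.X 0 * ((t ^ k / (k)!) • dxdp k k f)
        + (t ^ k / (k)! * k) • dxdp (k - 1) k f := by
    intro k
    rw [dxdp_X0_mul, smul_add, mul_smul_comm, ← Nat.cast_smul_eq_nsmul ℂ k, smul_smul]
  rw [Finset.sum_congr rfl fun k _ => hsplit k, Finset.sum_add_distrib, ← Finset.mul_sum]
  congr 1
  rw [Finset.sum_range_succ']
  simp only [Nat.cast_zero, mul_zero, zero_smul, add_zero, Nat.add_sub_cancel]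
  rw [Finset.smul_sum]
  refine Finset.sum_congr rfl fun k _ => ?_
  rw [dxdp_succ_right k k f, smul_smul]
  congr 1
  have h1 := fact_ne k
  have h2 : ((k : ℂ) + 1) ≠ 0 := Nat.cast_add_one_ne_zero k
  rw [Nat.factorial_succ]
  push_cast
  field_simp
  ring

lemma Sgen_X1 (t : ℂ) (f : P2) :
    Sgen t (MvPolynomial.X 1 * f) = MvPolynomial.X 1 * Sgen t f + t • Sgen t (Dv 0 f) := by
  set N := f.totalDegree + 1 with hN
  have hf : f.totalDegree < N + 1 := by omega
  have hXf : (MvPolynomial.X 1 * f).totalDegree < N + 1 :=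
    lt_of_le_of_lt (totalDegree_mul _ _) (by rw [totalDegree_X]; omega)
  have hDf : (Dv 0 f).totalDegree < N := lt_of_le_of_lt (totalDegree_Dv_le 0 f) (by omega)
  rw [Sgen_eq_sum t _ (N + 1) hXf, Sgen_eq_sum t f (N + 1) hf, Sgen_eq_sum t (Dv 0 f) N hDf]
  have hsplit : ∀ k, (t ^ k / (k)!) • dxdp k k (MvPolynomial.X 1 * f)
      = MvPolynomial.X 1 * ((t ^ k / (k)!) • dxdp k k f)
        + (t ^ k / (k)! * k) • dxdp k (k - 1) f := by
    intro k
    rw [dxdp_X1_mul, smul_add, mul_smul_comm, ← Nat.cast_smul_eq_nsmul ℂ k, smul_smul]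
  rw [Finset.sum_congr rfl fun k _ => hsplit k, Finset.sum_add_distrib, ← Finset.mul_sum]
  congr 1
  rw [Finset.sum_range_succ']
  simp only [Nat.cast_zero, mul_zero, zero_smul, add_zero, Nat.add_sub_cancel]
  rw [Finset.smul_sum]
  refine Finset.sum_congr rfl fun k _ => ?_
  rw [dxdp_succ_left k k f, smul_smul]
  congr 1
  have h1 := fact_ne k
  have h2 : ((k : ℂ) + 1) ≠ 0 := Nat.cast_add_one_ne_zero k
  rw [Nat.factorial_succ]
  push_cast
  field_simp
  ring




open MvPolynomial Finset

lemma Bop_X0_left (u v : ℂ) (f g : P2) :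
    Bop u v (MvPolynomial.X 0 * f) g
      = MvPolynomial.X 0 * Bop u v f g + u • Bop u v f (Dv 1 g) := by
  set N := f.totalDegree + 1 with hN
  have hf : f.totalDegree < N + 1 := by omega
  have hf' : f.totalDegree < N := by omega
  have hXf : (MvPolynomial.X 0 * f).totalDegree < N + 1 :=
    lt_of_le_of_lt (totalDegree_mul _ _) (by rw [totalDegree_X]; omega)
  rw [Bop_eq_sum u v _ g (N + 1) (N + 1) hXf hXf,
    Bop_eq_sum u v f g (N + 1) (N + 1) hf hf,
    Bop_eq_sum u v f (Dv 1 g) N (N + 1) hf' hf]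
  have hsplit : ∀ n m, ((u ^ n * v ^ m) / ((n)! * (m)!)) •
        (dxdp n m (MvPolynomial.X 0 * f) * dxdp m n g)
      = MvPolynomial.X 0 * (((u ^ n * v ^ m) / ((n)! * (m)!)) • (dxdp n m f * dxdp m n g))
        + ((u ^ n * v ^ m) / ((n)! * (m)!) * n) • (dxdp (n - 1) m f * dxdp m n g) := by
    intro n m
    rw [dxdp_X0_mul, add_mul, smul_add, mul_assoc, mul_smul_comm, smul_mul_assoc,
      ← Nat.cast_smul_eq_nsmul ℂ n, smul_smul]
  rw [Finset.sum_congr rfl fun n _ => Finset.sum_congr rfl fun m _ => hsplit n m]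
  simp only [Finset.sum_add_distrib]
  simp only [← Finset.mul_sum]
  congr 1
  rw [Finset.sum_range_succ']
  simp only [Nat.cast_zero, mul_zero, zero_smul, Finset.sum_const_zero, add_zero,
    Nat.add_sub_cancel]
  rw [Finset.smul_sum]
  refine Finset.sum_congr rfl fun k _ => ?_
  rw [Finset.smul_sum]
  refine Finset.sum_congr rfl fun m _ => ?_
  rw [dxdp_succ_right m k g, smul_smul]
  congr 1
  have h1 := fact_ne k
  have h2 := fact_ne m
  have h3 : ((k : ℂ) + 1) ≠ 0 := Nat.cast_add_one_ne_zero k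
  rw [Nat.factorial_succ]
  push_cast
  field_simp
  ring

lemma Bop_X1_left (u v : ℂ) (f g : P2) :
    Bop u v (MvPolynomial.X 1 * f) g
      = MvPolynomial.X 1 * Bop u v f g + v • Bop u v f (Dv 0 g) := by
  set N := f.totalDegree + 1 with hN
  have hf : f.totalDegree < N + 1 := by omega
  have hf' : f.totalDegree < N := by omega
  have hXf : (MvPolynomial.X 1 * f).totalDegree < N + 1 :=
    lt_of_le_of_lt (totalDegree_mul _ _) (by rw [totalDegree_X]; omega)
  rw [Bop_eq_sum u v _ g (N + 1) (N + 1) hXf hXf,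
    Bop_eq_sum u v f g (N + 1) (N + 1) hf hf,
    Bop_eq_sum u v f (Dv 0 g) (N + 1) N hf hf']
  have hsplit : ∀ n m, ((u ^ n * v ^ m) / ((n)! * (m)!)) •
        (dxdp n m (MvPolynomial.X 1 * f) * dxdp m n g)
      = MvPolynomial.X 1 * (((u ^ n * v ^ m) / ((n)! * (m)!)) • (dxdp n m f * dxdp m n g))
        + ((u ^ n * v ^ m) / ((n)! * (m)!) * m) • (dxdp n (m - 1) f * dxdp m n g) := by
    intro n m
    rw [dxdp_X1_mul, add_mul, smul_add, mul_assoc, mul_smul_comm, smul_mul_assoc,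
      ← Nat.cast_smul_eq_nsmul ℂ m, smul_smul]
  rw [Finset.sum_congr rfl fun n _ => Finset.sum_congr rfl fun m _ => hsplit n m]
  simp only [Finset.sum_add_distrib]
  simp only [← Finset.mul_sum]
  congr 1
  rw [Finset.sum_congr rfl fun n _ => Finset.sum_range_succ'
    (fun m => ((u ^ n * v ^ m) / ((n)! * (m)!) * m) • (dxdp n (m - 1) f * dxdp m n g)) N]
  simp only [Nat.cast_zero, mul_zero, zero_smul, add_zero, Nat.add_sub_cancel]
  rw [Finset.smul_sum]
  refine Finset.sum_congr rfl fun n _ => ?_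
  rw [Finset.smul_sum]
  refine Finset.sum_congr rfl fun j _ => ?_
  rw [dxdp_succ_left j n g, smul_smul]
  congr 1
  have h1 := fact_ne n
  have h2 := fact_ne j
  have h3 : ((j : ℂ) + 1) ≠ 0 := Nat.cast_add_one_ne_zero j
  rw [Nat.factorial_succ]
  push_cast
  field_simp
  ring

lemma Bop_X0_right (u v : ℂ) (f g : P2) :
    Bop u v f (MvPolynomial.X 0 * g)
      = MvPolynomial.X 0 * Bop u v f g + v • Bop u v (Dv 1 f) g := by
  rw [Bop_comm, Bop_X0_left, Bop_comm v u, Bop_comm v u]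

lemma Bop_X1_right (u v : ℂ) (f g : P2) :
    Bop u v f (MvPolynomial.X 1 * g)
      = MvPolynomial.X 1 * Bop u v f g + u • Bop u v (Dv 0 f) g := by
  rw [Bop_comm, Bop_X1_left, Bop_comm v u, Bop_comm v u]




open MvPolynomial Finset

lemma main_C (u v t a : ℂ) (g : P2) :
    Sgen t (Bop u v (MvPolynomial.C a) g)
      = Bop (u + t) (v + t) (Sgen t (MvPolynomial.C a)) (Sgen t g) := by
  have hC : (MvPolynomial.C a : P2) = a • 1 := by rw [smul_eq_C_mul, mul_one]
  rw [hC, Bop_smul_left, Bop_one_left, Sgen_smul, Sgen_smul, Sgen_one, Bop_smul_left,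
    Bop_one_left]

lemma main_X0_step (u v t : ℂ) (f : P2)
    (IH1 : ∀ g, Sgen t (Bop u v f g) = Bop (u + t) (v + t) (Sgen t f) (Sgen t g))
    (IH2 : ∀ g, Sgen t (Bop u v (Dv 1 f) g)
      = Bop (u + t) (v + t) (Sgen t (Dv 1 f)) (Sgen t g)) (g : P2) :
    Sgen t (Bop u v (MvPolynomial.X 0 * f) g)
      = Bop (u + t) (v + t) (Sgen t (MvPolynomial.X 0 * f)) (Sgen t g) := by
  rw [Bop_X0_left u v f g, Sgen_add, Sgen_smul, Sgen_X0 t (Bop u v f g), Bop_Dv1 u v f g,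
    Sgen_add, IH1 g, IH2 g, IH1 (Dv 1 g), Sgen_X0 t f, Bop_add_left, Bop_smul_left,
    Bop_X0_left (u + t) (v + t) (Sgen t f) (Sgen t g), ← Sgen_Dv1 t g]
  module

lemma main_X1_step (u v t : ℂ) (f : P2)
    (IH1 : ∀ g, Sgen t (Bop u v f g) = Bop (u + t) (v + t) (Sgen t f) (Sgen t g))
    (IH2 : ∀ g, Sgen t (Bop u v (Dv 0 f) g)
      = Bop (u + t) (v + t) (Sgen t (Dv 0 f)) (Sgen t g)) (g : P2) :
    Sgen t (Bop u v (MvPolynomial.X 1 * f) g)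
      = Bop (u + t) (v + t) (Sgen t (MvPolynomial.X 1 * f)) (Sgen t g) := by
  rw [Bop_X1_left u v f g, Sgen_add, Sgen_smul, Sgen_X1 t (Bop u v f g), Bop_Dv0 u v f g,
    Sgen_add, IH1 g, IH2 g, IH1 (Dv 0 g), Sgen_X1 t f, Bop_add_left, Bop_smul_left,
    Bop_X1_left (u + t) (v + t) (Sgen t f) (Sgen t g), ← Sgen_Dv0 t g]
  module

lemma main_zero (u v t : ℂ) (g : P2) :
    Sgen t (Bop u v 0 g) = Bop (u + t) (v + t) (Sgen t 0) (Sgen t g) := by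
  rw [Bop_zero_left, Sgen_zero, Bop_zero_left]

lemma main_add (u v t : ℂ) {f₁ f₂ : P2} (g : P2)
    (h1 : Sgen t (Bop u v f₁ g) = Bop (u + t) (v + t) (Sgen t f₁) (Sgen t g))
    (h2 : Sgen t (Bop u v f₂ g) = Bop (u + t) (v + t) (Sgen t f₂) (Sgen t g)) :
    Sgen t (Bop u v (f₁ + f₂) g) = Bop (u + t) (v + t) (Sgen t (f₁ + f₂)) (Sgen t g) := by
  rw [Bop_add_left, Sgen_add, h1, h2, Sgen_add, Bop_add_left]

lemma main_smul (u v t a : ℂ) {f : P2} (g : P2)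
    (h : Sgen t (Bop u v f g) = Bop (u + t) (v + t) (Sgen t f) (Sgen t g)) :
    Sgen t (Bop u v (a • f) g) = Bop (u + t) (v + t) (Sgen t (a • f)) (Sgen t g) := by
  rw [Bop_smul_left, Sgen_smul, h, Sgen_smul, Bop_smul_left]

lemma main_aux (u v t : ℂ) :
    ∀ N : ℕ, ∀ f : P2, f.totalDegree < N → ∀ g,
      Sgen t (Bop u v f g) = Bop (u + t) (v + t) (Sgen t f) (Sgen t g) := by
  intro N
  induction N with
  | zero => intro f hf; omega
  | succ N ih =>
    intro f hf g
    have hmono : ∀ (d : Fin 2 →₀ ℕ), d 0 + d 1 ≤ N → ∀ (a : ℂ) (g : P2),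
        Sgen t (Bop u v (monomial d a) g)
          = Bop (u + t) (v + t) (Sgen t (monomial d a)) (Sgen t g) := by
      intro d hd a g
      by_cases h0 : d = 0
      · subst h0
        rw [monomial_zero']
        exact main_C u v t a g
      · obtain ⟨i, hi⟩ : ∃ i, d i ≠ 0 := by
          by_contra hcon
          push_neg at hcon
          exact h0 (Finsupp.ext hcon)
        have h2 : i = 0 ∨ i = 1 := by fin_cases i <;> decide
        set d' : Fin 2 →₀ ℕ := d - Finsupp.single i 1 with hd'def
        have hdd : Finsupp.single i 1 + d' = d := by
          ext x
          rcases eq_or_ne x i with rfl | hx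
          · have h1 := Finsupp.tsub_apply d (Finsupp.single x 1) x
            have h2 : (Finsupp.single x (1:ℕ)) x = 1 := Finsupp.single_eq_same
            simp only [Finsupp.add_apply, hd'def, h1, h2]
            omega
          · have h1 := Finsupp.tsub_apply d (Finsupp.single i 1) x
            have h2 : (Finsupp.single i (1:ℕ)) x = 0 := Finsupp.single_eq_of_ne' (Ne.symm hx)
            simp only [Finsupp.add_apply, hd'def, h1, h2]
            omega
        have hX : (monomial d a : P2) = MvPolynomial.X i * monomial d' a := by
          rw [show (MvPolynomial.X i : P2) = monomial (Finsupp.single i 1) 1 from rfl,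
            monomial_mul, one_mul, hdd]
        have hsub0 : d' 0 = d 0 - (Finsupp.single i (1:ℕ)) 0 :=
          Finsupp.tsub_apply d (Finsupp.single i 1) 0
        have hsub1 : d' 1 = d 1 - (Finsupp.single i (1:ℕ)) 1 :=
          Finsupp.tsub_apply d (Finsupp.single i 1) 1
        have hd'deg : (monomial d' a : P2).totalDegree < N := by
          have h1 : (monomial d' a : P2).totalDegree ≤ d' 0 + d' 1 := by
            refine (totalDegree_monomial_le _ _).trans ?_
            exact le_of_eq (sum_fin2 d')
          rcases h2 with rfl | rfl
          · have e1 : (Finsupp.single (0 : Fin 2) (1:ℕ)) 0 = 1 := Finsupp.single_eq_same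
            have e2 : (Finsupp.single (0 : Fin 2) (1:ℕ)) 1 = 0 :=
              Finsupp.single_eq_of_ne (by decide)
            omega
          · have e1 : (Finsupp.single (1 : Fin 2) (1:ℕ)) 1 = 1 := Finsupp.single_eq_same
            have e2 : (Finsupp.single (1 : Fin 2) (1:ℕ)) 0 = 0 :=
              Finsupp.single_eq_of_ne (by decide)
            omega
        have IH1 : ∀ g, Sgen t (Bop u v (monomial d' a) g)
            = Bop (u + t) (v + t) (Sgen t (monomial d' a)) (Sgen t g) :=
          fun g => ih _ hd'deg g
        rcases h2 with rfl | rfl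
        · have IH2 : ∀ g, Sgen t (Bop u v (Dv 1 (monomial d' a)) g)
              = Bop (u + t) (v + t) (Sgen t (Dv 1 (monomial d' a))) (Sgen t g) :=
            fun g => ih _ (lt_of_le_of_lt (totalDegree_Dv_le 1 _) hd'deg) g
          rw [hX]
          exact main_X0_step u v t _ IH1 IH2 g
        · have IH2 : ∀ g, Sgen t (Bop u v (Dv 0 (monomial d' a)) g)
              = Bop (u + t) (v + t) (Sgen t (Dv 0 (monomial d' a))) (Sgen t g) :=
            fun g => ih _ (lt_of_le_of_lt (totalDegree_Dv_le 0 _) hd'deg) g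
          rw [hX]
          exact main_X1_step u v t _ IH1 IH2 g
    have hsum : ∀ (s : Finset (Fin 2 →₀ ℕ)) (F : (Fin 2 →₀ ℕ) → P2),
        (∀ d ∈ s, ∀ g, Sgen t (Bop u v (F d) g)
          = Bop (u + t) (v + t) (Sgen t (F d)) (Sgen t g)) →
        ∀ g, Sgen t (Bop u v (∑ d ∈ s, F d) g)
          = Bop (u + t) (v + t) (Sgen t (∑ d ∈ s, F d)) (Sgen t g) := by
      intro s
      induction s using Finset.cons_induction with
      | empty => intro F _ g; simpa using main_zero u v t g
      | cons d s hds ihs =>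
        intro F hF g
        rw [Finset.sum_cons]
        exact main_add u v t g (hF d (Finset.mem_cons_self d s) g)
          (ihs F (fun e he g => hF e (Finset.mem_cons_of_mem he) g) g)
    have h := hsum f.support (fun d => monomial d (MvPolynomial.coeff d f))
      (fun d hd g => by
        have h1 := MvPolynomial.le_totalDegree hd
        rw [sum_fin2] at h1
        exact hmono d (by omega) _ g) g
    rw [MvPolynomial.support_sum_monomial_coeff] at h
    exact h

lemma main (u v t : ℂ) (f g : P2) :
    Sgen t (Bop u v f g) = Bop (u + t) (v + t) (Sgen t f) (Sgen t g) :=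
  main_aux u v t (f.totalDegree + 1) f (by omega) g



lemma polyStar_eq (hbar σ : ℝ) (f g : P2) :
    polyStar hbar σ f g
      = Bop (Complex.I * (hbar : ℂ) * (σ : ℂ))
          (-(Complex.I * (hbar : ℂ) * ((1 : ℂ) - (σ : ℂ)))) f g := by
  have hv : (-(Complex.I * (hbar : ℂ) * ((1 : ℂ) - (σ : ℂ))))
      = (-1) * (Complex.I * (hbar : ℂ)) * ((1 : ℂ) - (σ : ℂ)) := by ring
  rw [polyStar, Bop, hv]
  apply finsum_congr
  intro nm
  congr 1
  simp only [pow_add, mul_pow]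
  ring

lemma Sop_eq (hbar c : ℝ) (f : P2) :
    Sop hbar c f = Sgen (Complex.I * (hbar : ℂ) * (c : ℂ)) f := rfl


end StarAux

/-- `S_{σ'−σ}` intertwines the `σ`-star product with the `σ'`-star product:
`S_{σ'−σ}(f ⋆_σ g) = (S_{σ'−σ} f) ⋆_{σ'} (S_{σ'−σ} g)`. -/
theorem stmt_19 (hbar σ σ' : ℝ) (f g : MvPolynomial (Fin 2) ℂ) :
    Sop hbar (σ' - σ) (polyStar hbar σ f g) =
      polyStar hbar σ' (Sop hbar (σ' - σ) f) (Sop hbar (σ' - σ) g) := by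
  rw [StarAux.Sop_eq, StarAux.Sop_eq, StarAux.Sop_eq, StarAux.polyStar_eq,
    StarAux.polyStar_eq]
  have h1 : Complex.I * (hbar : ℂ) * (σ' : ℂ)
      = Complex.I * (hbar : ℂ) * (σ : ℂ) + Complex.I * (hbar : ℂ) * ((σ' - σ : ℝ) : ℂ) := by
    push_cast
    ring
  have h2 : -(Complex.I * (hbar : ℂ) * ((1 : ℂ) - (σ' : ℂ)))
      = -(Complex.I * (hbar : ℂ) * ((1 : ℂ) - (σ : ℂ)))
        + Complex.I * (hbar : ℂ) * ((σ' - σ : ℝ) : ℂ) := by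
    push_cast
    ring
  rw [h1, h2]
  exact StarAux.main _ _ _ f g
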